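/- Let C be a set of strictly increasing integer vectors (of possibly different lengths). Suppose d_a(x, y) > t_r + t_l for all distinct x, y ∈ C of the same length (where d_a(x,y) = max{Σ_i (x_i - y_i)^+, Σ_i (x_i - y_i)^-}). Then for all distinct x, y ∈ C of the same length W and all f, g ∈ Z^W with Σ_i f_i^+ ≤ t_r, Σ_i f_i^- ≤ t_l, Σ_i g_i^+ ≤ t_r, Σ_i g_i^- ≤ t_l, one has x + f ≠ y + g. Conversely, if d_a(x,y) ≤ t_r + t_l for some distinct same-length x, y ∈ C, then such f, g with x + f = y + g exist. -/
import Mathlib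

/-- The asymmetric distance on `ℤ^W`. -/
def da (W : ℕ) (x y : Fin W → ℤ) : ℤ :=
  max (∑ i, max (x i - y i) 0) (∑ i, max (y i - x i) 0)

lemma split_aux (W : ℕ) (tr tl : ℤ) (htr : 0 ≤ tr) (htl : 0 ≤ tl) (d : Fin W → ℤ)
    (hP : (∑ i, max (d i) 0) ≤ tr + tl) (hN : (∑ i, max (-d i) 0) ≤ tr + tl) :
    ∃ f g : Fin W → ℤ,
      (∑ i, max (f i) 0) ≤ tr ∧ (∑ i, max (-f i) 0) ≤ tl ∧
      (∑ i, max (g i) 0) ≤ tr ∧ (∑ i, max (-g i) 0) ≤ tl ∧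
      ∀ i, g i - f i = d i := by
  set dp : ℕ → ℤ := fun j => if h : j < W then max (d ⟨j, h⟩) 0 else 0 with hdp
  set dn : ℕ → ℤ := fun j => if h : j < W then max (-d ⟨j, h⟩) 0 else 0 with hdn
  set S : ℕ → ℤ := fun k => ∑ j ∈ Finset.range k, dp j with hS
  set T : ℕ → ℤ := fun k => ∑ j ∈ Finset.range k, dn j with hT
  set A : ℕ → ℤ := fun j => min (S (j + 1)) tr - min (S j) tr with hA
  set B : ℕ → ℤ := fun j => min (T (j + 1)) tl - min (T j) tl with hB
  have hSstep : ∀ j, S (j + 1) = S j + dp j := fun j => Finset.sum_range_succ dp j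
  have hTstep : ∀ j, T (j + 1) = T j + dn j := fun j => Finset.sum_range_succ dn j
  have hdp0 : ∀ j, 0 ≤ dp j := by intro j; simp only [hdp]; split <;> simp [le_max_right]
  have hdn0 : ∀ j, 0 ≤ dn j := by intro j; simp only [hdn]; split <;> simp [le_max_right]
  have hA1 : ∀ j, 0 ≤ A j ∧ A j ≤ dp j := by
    intro j; have := hSstep j; have := hdp0 j; constructor <;> simp only [hA] <;> omega
  have hB1 : ∀ j, 0 ≤ B j ∧ B j ≤ dn j := by
    intro j; have := hTstep j; have := hdn0 j; constructor <;> simp only [hB] <;> omega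
  have hsumA : (∑ i : Fin W, A i.1) = min (S W) tr := by
    rw [Fin.sum_univ_eq_sum_range (fun j => A j), hA, Finset.sum_range_sub (fun k => min (S k) tr)]
    simp [hS, htr]
  have hsumB : (∑ i : Fin W, B i.1) = min (T W) tl := by
    rw [Fin.sum_univ_eq_sum_range (fun j => B j), hB, Finset.sum_range_sub (fun k => min (T k) tl)]
    simp [hT, htl]
  have hdpi : ∀ i : Fin W, dp i.1 = max (d i) 0 := by intro i; simp [hdp, i.2]
  have hdni : ∀ i : Fin W, dn i.1 = max (-d i) 0 := by intro i; simp [hdn, i.2]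
  have hSsum : (∑ i : Fin W, dp i.1) = S W := Fin.sum_univ_eq_sum_range dp W
  have hTsum : (∑ i : Fin W, dn i.1) = T W := Fin.sum_univ_eq_sum_range dn W
  have hSW : S W = ∑ i : Fin W, max (d i) 0 := by
    rw [← hSsum]; exact Finset.sum_congr rfl fun i _ => hdpi i
  have hTW : T W = ∑ i : Fin W, max (-d i) 0 := by
    rw [← hTsum]; exact Finset.sum_congr rfl fun i _ => hdni i
  refine ⟨fun i => (A i.1 - B i.1) - d i, fun i => A i.1 - B i.1, ?_, ?_, ?_, ?_, fun i => by ring⟩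
  · calc (∑ i : Fin W, max ((A i.1 - B i.1) - d i) 0) ≤ ∑ i : Fin W, (dn i.1 - B i.1) := by
          apply Finset.sum_le_sum; intro i _
          have h1 := hA1 i.1; have h2 := hB1 i.1; have h3 := hdpi i; have h4 := hdni i
          have : d i = max (d i) 0 - max (-d i) 0 := by omega
          omega
      _ = T W - min (T W) tl := by rw [Finset.sum_sub_distrib, hsumB, hTsum]
      _ ≤ tr := by rw [hTW]; omega
  · calc (∑ i : Fin W, max (-((A i.1 - B i.1) - d i)) 0) ≤ ∑ i : Fin W, (dp i.1 - A i.1) := by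
          apply Finset.sum_le_sum; intro i _
          have h1 := hA1 i.1; have h2 := hB1 i.1; have h3 := hdpi i; have h4 := hdni i
          have : d i = max (d i) 0 - max (-d i) 0 := by omega
          omega
      _ = S W - min (S W) tr := by rw [Finset.sum_sub_distrib, hsumA, hSsum]
      _ ≤ tl := by rw [hSW]; omega
  · calc (∑ i : Fin W, max (A i.1 - B i.1) 0) ≤ ∑ i : Fin W, A i.1 := by
          apply Finset.sum_le_sum; intro i _
          have h1 := hA1 i.1; have h2 := hB1 i.1; omega
      _ ≤ tr := by rw [hsumA]; omega
  · calc (∑ i : Fin W, max (-(A i.1 - B i.1)) 0) ≤ ∑ i : Fin W, B i.1 := by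
          apply Finset.sum_le_sum; intro i _
          have h1 := hA1 i.1; have h2 := hB1 i.1; omega
      _ ≤ tl := by rw [hsumB]; omega

theorem stmt16 (tr tl : ℕ) (C : Set (Σ W : ℕ, Fin W → ℤ))
    (hmono : ∀ c ∈ C, StrictMono c.2) :
    ((∀ x ∈ C, ∀ y ∈ C, x ≠ y → ∀ h : x.1 = y.1,
        ((tr : ℤ) + tl) < da x.1 x.2 (y.2 ∘ Fin.cast h)) →
      ∀ x ∈ C, ∀ y ∈ C, x ≠ y → ∀ h : x.1 = y.1, ∀ f g : Fin x.1 → ℤ,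
        (∑ i, max (f i) 0) ≤ (tr : ℤ) → (∑ i, max (-f i) 0) ≤ (tl : ℤ) →
        (∑ i, max (g i) 0) ≤ (tr : ℤ) → (∑ i, max (-g i) 0) ≤ (tl : ℤ) →
        x.2 + f ≠ (y.2 ∘ Fin.cast h) + g) ∧
    (∀ x ∈ C, ∀ y ∈ C, x ≠ y → ∀ h : x.1 = y.1,
      da x.1 x.2 (y.2 ∘ Fin.cast h) ≤ ((tr : ℤ) + tl) →
      ∃ f g : Fin x.1 → ℤ,
        (∑ i, max (f i) 0) ≤ (tr : ℤ) ∧ (∑ i, max (-f i) 0) ≤ (tl : ℤ) ∧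
        (∑ i, max (g i) 0) ≤ (tr : ℤ) ∧ (∑ i, max (-g i) 0) ≤ (tl : ℤ) ∧
        x.2 + f = (y.2 ∘ Fin.cast h) + g) := by
  constructor
  · intro hbig x hx y hy hne h f g hf1 hf2 hg1 hg2 heq
    have hlt := hbig x hx y hy hne h
    set y' := y.2 ∘ Fin.cast h with hy'
    have hcoord : ∀ i, x.2 i - y' i = g i - f i := by
      intro i
      have := congrFun heq i
      simp only [Pi.add_apply] at this
      omega
    have hP : (∑ i, max (x.2 i - y' i) 0) ≤ (tr : ℤ) + tl := by
      calc (∑ i, max (x.2 i - y' i) 0) ≤ ∑ i, (max (g i) 0 + max (-f i) 0) := by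
            apply Finset.sum_le_sum; intro i _; have := hcoord i; omega
        _ = (∑ i, max (g i) 0) + ∑ i, max (-f i) 0 := Finset.sum_add_distrib
        _ ≤ (tr : ℤ) + tl := add_le_add hg1 hf2
    have hN : (∑ i, max (y' i - x.2 i) 0) ≤ (tr : ℤ) + tl := by
      calc (∑ i, max (y' i - x.2 i) 0) ≤ ∑ i, (max (f i) 0 + max (-g i) 0) := by
            apply Finset.sum_le_sum; intro i _; have := hcoord i; omega
        _ = (∑ i, max (f i) 0) + ∑ i, max (-g i) 0 := Finset.sum_add_distrib
        _ ≤ (tr : ℤ) + tl := add_le_add hf1 hg2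
    have : da x.1 x.2 y' ≤ (tr : ℤ) + tl := max_le hP hN
    omega
  · intro x hx y hy hne h hle
    set y' := y.2 ∘ Fin.cast h with hy'
    have hP : (∑ i, max (x.2 i - y' i) 0) ≤ (tr : ℤ) + tl :=
      le_trans (le_max_left _ _) hle
    have hN : (∑ i, max (y' i - x.2 i) 0) ≤ (tr : ℤ) + tl :=
      le_trans (le_max_right _ _) hle
    obtain ⟨f, g, h1, h2, h3, h4, h5⟩ := split_aux x.1 tr tl (by positivity) (by positivity)
      (fun i => x.2 i - y' i) hP (by simpa using hN)
    exact ⟨f, g, h1, h2, h3, h4, by funext i; have := h5 i; simp only [Pi.add_apply]; omega⟩
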